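/- Let τ ∈ (0,1), κ > 0, A ∈ ℝ^{n×p} with rows A₁,…,Aₙ and with every column having Euclidean norm at most √n, b ∈ ℝⁿ, and let L_n(x) = (1/n)·Σ_{i=1}^{n} ρ_{τ,κ}(bᵢ − Aᵢᵀx). Let (x^{(k)}, S^{(k)}) be iterates of fully corrective greedy selection (generalized OMP): S^{(0)} = ∅, x^{(0)} = 0, and for each k ≥ 1, S^{(k)} = S^{(k−1)} ∪ {i_k} where i_k maximizes |∂L_n/∂x_i(x^{(k−1)})| over i ∈ {1,…,p}, and x^{(k)} minimizes L_n over all vectors supported on S^{(k)}. Then for every reference vector x̃ ∈ ℝᵖ and every ε > 0, if k ≥ 2‖x̃‖₁²/(κ·ε), then L_n(x^{(k)}) − L_n(x̃) ≤ ε. -/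

import Mathlib

/-- The quantile Huber penalty with quantile parameter `τ` and smoothing parameter `κ`. -/
noncomputable def qHuber (τ κ x : ℝ) : ℝ :=
  if x < -(τ * κ) then τ * |x| - κ * τ ^ 2 / 2
  else if x ≤ (1 - τ) * κ then x ^ 2 / (2 * κ)
  else (1 - τ) * |x| - κ * (1 - τ) ^ 2 / 2

/-- The partial derivative of `f : (Fin p → ℝ) → ℝ` in the `i`-th coordinate at `x`. -/
noncomputable def pder {p : ℕ} (f : (Fin p → ℝ) → ℝ) (x : Fin p → ℝ) (i : Fin p) : ℝ :=
  deriv (fun t => f (Function.update x i t)) (x i)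

noncomputable def qHuberD (τ κ x : ℝ) : ℝ := max (-τ) (min (1 - τ) (x / κ))

section pointwise
variable {τ κ : ℝ} (hτ : τ ∈ Set.Ioo (0 : ℝ) 1) (hκ : 0 < κ)
include hτ hκ

lemma qHuberD_ge (x : ℝ) : -τ ≤ qHuberD τ κ x := le_max_left _ _

lemma qHuberD_le (x : ℝ) : qHuberD τ κ x ≤ 1 - τ := by
  apply max_le
  · linarith [hτ.1, hτ.2]
  · exact min_le_left _ _

lemma qHuberD_of_lt (x : ℝ) (h : x < -(τ * κ)) : qHuberD τ κ x = -τ := by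
  have h1 : x / κ < -τ := by rw [div_lt_iff₀ hκ]; linarith
  have h2 : x / κ ≤ 1 - τ := by linarith [hτ.1, hτ.2]
  rw [qHuberD, min_eq_right h2, max_eq_left h1.le]

lemma qHuberD_of_mid (x : ℝ) (h1 : -(τ * κ) ≤ x) (h2 : x ≤ (1 - τ) * κ) :
    qHuberD τ κ x = x / κ := by
  have h1' : -τ ≤ x / κ := by rw [le_div_iff₀ hκ]; linarith
  have h2' : x / κ ≤ 1 - τ := by rw [div_le_iff₀ hκ]; linarith
  rw [qHuberD, min_eq_right h2', max_eq_right h1']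

lemma qHuberD_of_gt (x : ℝ) (h : (1 - τ) * κ < x) : qHuberD τ κ x = 1 - τ := by
  have h1 : 1 - τ ≤ x / κ := by rw [le_div_iff₀ hκ]; linarith
  rw [qHuberD, min_eq_left h1, max_eq_right (by linarith [hτ.1, hτ.2] : -τ ≤ 1 - τ)]

lemma qHuber_eq_sup (x : ℝ) :
    qHuber τ κ x = qHuberD τ κ x * x - κ * (qHuberD τ κ x) ^ 2 / 2 := by
  have hτ0 := hτ.1
  have hτ1 := hτ.2
  rw [qHuber]
  split_ifs with h1 h2
  · rw [qHuberD_of_lt hτ hκ x h1, abs_of_neg (by nlinarith : x < 0)]; ring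
  · rw [qHuberD_of_mid hτ hκ x (not_lt.mp h1) h2]
    field_simp
    try ring
  · rw [qHuberD_of_gt hτ hκ x (not_le.mp h2),
      abs_of_pos (by nlinarith : (0:ℝ) < x)]

lemma qHuber_lower (g y : ℝ) (hg1 : -τ ≤ g) (hg2 : g ≤ 1 - τ) :
    g * y - κ * g ^ 2 / 2 ≤ qHuber τ κ y := by
  have hτ0 := hτ.1
  have hτ1 := hτ.2
  rw [qHuber]
  split_ifs with h1 h2
  · rw [abs_of_neg (by nlinarith : y < 0)]
    nlinarith [mul_nonneg (by linarith : (0:ℝ) ≤ g + τ)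
      (by nlinarith : (0:ℝ) ≤ κ * (g - τ) / 2 - y)]
  · push_neg at h1
    have key : y ^ 2 / (2 * κ) = g * y - κ * g ^ 2 / 2 + (y - κ * g) ^ 2 / (2 * κ) := by
      field_simp
      ring
    have h0 : (0:ℝ) ≤ (y - κ * g) ^ 2 / (2 * κ) := by positivity
    linarith
  · push_neg at h2
    rw [abs_of_pos (by nlinarith : (0:ℝ) < y)]
    nlinarith [mul_nonneg (by linarith : (0:ℝ) ≤ (1 - τ) - g)
      (by nlinarith : (0:ℝ) ≤ y - κ * ((1 - τ) + g) / 2)]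

lemma qHuber_upper (u y : ℝ) :
    qHuber τ κ y ≤ max (-τ * u) ((1 - τ) * u) + (y - u) ^ 2 / (2 * κ) := by
  have hτ0 := hτ.1
  have hτ1 := hτ.2
  rw [qHuber]
  split_ifs with h1 h2
  · rw [abs_of_neg (by nlinarith : y < 0)]
    have hm : -τ * u ≤ max (-τ * u) ((1 - τ) * u) := le_max_left _ _
    have key : -τ * u + (y - u) ^ 2 / (2 * κ) =
        τ * -y - κ * τ ^ 2 / 2 + (y - u + κ * τ) ^ 2 / (2 * κ) := by
      field_simp
      ring
    have h0 : (0:ℝ) ≤ (y - u + κ * τ) ^ 2 / (2 * κ) := by positivity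
    linarith
  · push_neg at h1
    rcases le_total 0 u with hu | hu
    · have hm : (1 - τ) * u ≤ max (-τ * u) ((1 - τ) * u) := le_max_right _ _
      have key : (1 - τ) * u + (y - u) ^ 2 / (2 * κ) =
          y ^ 2 / (2 * κ) + u * ((1 - τ) * κ - y) / κ + u ^ 2 / (2 * κ) := by
        field_simp
        ring
      have h0 : (0:ℝ) ≤ u * ((1 - τ) * κ - y) / κ :=
        div_nonneg (mul_nonneg hu (by linarith)) hκ.le
      have h0' : (0:ℝ) ≤ u ^ 2 / (2 * κ) := by positivity
      linarith
    · have hm : -τ * u ≤ max (-τ * u) ((1 - τ) * u) := le_max_left _ _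
      have key : -τ * u + (y - u) ^ 2 / (2 * κ) =
          y ^ 2 / (2 * κ) + (-u) * (y + τ * κ) / κ + u ^ 2 / (2 * κ) := by
        field_simp
        ring
      have h0 : (0:ℝ) ≤ (-u) * (y + τ * κ) / κ :=
        div_nonneg (mul_nonneg (by linarith) (by linarith)) hκ.le
      have h0' : (0:ℝ) ≤ u ^ 2 / (2 * κ) := by positivity
      linarith
  · push_neg at h2
    rw [abs_of_pos (by nlinarith : (0:ℝ) < y)]
    have hm : (1 - τ) * u ≤ max (-τ * u) ((1 - τ) * u) := le_max_right _ _
    have key : (1 - τ) * u + (y - u) ^ 2 / (2 * κ) =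
        (1 - τ) * y - κ * (1 - τ) ^ 2 / 2 + (y - u - κ * (1 - τ)) ^ 2 / (2 * κ) := by
      field_simp
      ring
    have h0 : (0:ℝ) ≤ (y - u - κ * (1 - τ)) ^ 2 / (2 * κ) := by positivity
    linarith

lemma qHuber_moreau (x : ℝ) :
    qHuber τ κ x = max (-τ * (x - κ * qHuberD τ κ x)) ((1 - τ) * (x - κ * qHuberD τ κ x))
      + κ * (qHuberD τ κ x) ^ 2 / 2 := by
  have hτ0 := hτ.1
  have hτ1 := hτ.2
  rw [qHuber]
  split_ifs with h1 h2
  · rw [qHuberD_of_lt hτ hκ x h1]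
    have hu : x - κ * (-τ) < 0 := by nlinarith
    rw [max_eq_left (by nlinarith : (1 - τ) * (x - κ * -τ) ≤ -τ * (x - κ * -τ)),
      abs_of_neg (by nlinarith : x < 0)]
    ring
  · rw [qHuberD_of_mid hτ hκ x (not_lt.mp h1) h2]
    have hz : x - κ * (x / κ) = 0 := by field_simp; ring
    rw [hz]
    simp
    field_simp
  · push_neg at h2
    rw [qHuberD_of_gt hτ hκ x h2]
    have hu : (0:ℝ) ≤ x - κ * (1 - τ) := by nlinarith
    rw [max_eq_right (by nlinarith : -τ * (x - κ * (1 - τ)) ≤ (1 - τ) * (x - κ * (1 - τ))),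
      abs_of_pos (by nlinarith : (0:ℝ) < x)]
    ring

lemma qHuber_convex_ineq (x y : ℝ) :
    qHuber τ κ x + qHuberD τ κ x * (y - x) ≤ qHuber τ κ y := by
  have h := qHuber_lower hτ hκ (qHuberD τ κ x) y (qHuberD_ge hτ hκ x) (qHuberD_le hτ hκ x)
  rw [qHuber_eq_sup hτ hκ x]
  linarith [h]

lemma qHuber_smooth_ineq (x y : ℝ) :
    qHuber τ κ y ≤ qHuber τ κ x + qHuberD τ κ x * (y - x) + (y - x) ^ 2 / (2 * κ) := by
  set g := qHuberD τ κ x with hg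
  have h := qHuber_upper hτ hκ (x - κ * g) y
  have hm := qHuber_moreau hτ hκ x
  have hexp : (y - (x - κ * g)) ^ 2 / (2 * κ) =
      (y - x) ^ 2 / (2 * κ) + g * (y - x) + κ * g ^ 2 / 2 := by
    field_simp
    ring
  linarith [h, hexp]

end pointwise

section deriv
variable {τ κ : ℝ} (hτ : τ ∈ Set.Ioo (0 : ℝ) 1) (hκ : 0 < κ)
include hτ hκ

lemma qHuber_eqOn_left : Set.EqOn (qHuber τ κ) (fun y => -(τ * y) - κ * τ ^ 2 / 2)
    (Set.Iic (-(τ * κ))) := by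
  intro y hy
  simp only [Set.mem_Iic] at hy
  rcases lt_or_eq_of_le hy with h | h
  · rw [qHuber, if_pos h, abs_of_neg (by nlinarith [hτ.1, hτ.2] : y < 0)]
    ring
  · have h2 : y ≤ (1 - τ) * κ := by nlinarith [hτ.1, hτ.2]
    rw [qHuber, if_neg (by rw [h]; exact lt_irrefl _), if_pos h2, h]
    field_simp
    ring

lemma qHuber_eqOn_mid : Set.EqOn (qHuber τ κ) (fun y => y ^ 2 / (2 * κ))
    (Set.Icc (-(τ * κ)) ((1 - τ) * κ)) := by
  intro y hy
  rw [qHuber, if_neg (not_lt.mpr hy.1), if_pos hy.2]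

lemma qHuber_eqOn_right : Set.EqOn (qHuber τ κ) (fun y => (1 - τ) * y - κ * (1 - τ) ^ 2 / 2)
    (Set.Ici ((1 - τ) * κ)) := by
  intro y hy
  simp only [Set.mem_Ici] at hy
  rcases lt_or_eq_of_le hy with h | h
  · rw [qHuber, if_neg (by push_neg; nlinarith [hτ.1, hτ.2]), if_neg (not_le.mpr h),
      abs_of_pos (by nlinarith [hτ.1, hτ.2] : (0:ℝ) < y)]
  · have h1 : ¬ y < -(τ * κ) := by push_neg; nlinarith [hτ.1, hτ.2]
    rw [qHuber, if_neg h1, if_pos (le_of_eq h.symm), ← h]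
    field_simp
    ring

lemma hasDerivAt_left (c : ℝ) (x : ℝ) :
    HasDerivAt (fun y : ℝ => -(τ * y) - c) (-τ) x := by
  simpa using (((hasDerivAt_id x).const_mul τ).neg.sub_const c)

lemma hasDerivAt_mid (x : ℝ) :
    HasDerivAt (fun y : ℝ => y ^ 2 / (2 * κ)) (x / κ) x := by
  have h := (hasDerivAt_pow 2 x).div_const (2 * κ)
  refine h.congr_deriv ?_
  field_simp
  ring

lemma hasDerivAt_right (c : ℝ) (x : ℝ) :
    HasDerivAt (fun y : ℝ => (1 - τ) * y - c) (1 - τ) x := by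
  simpa using (((hasDerivAt_id x).const_mul (1 - τ)).sub_const c)

lemma qHuber_hasDerivAt (x : ℝ) : HasDerivAt (qHuber τ κ) (qHuberD τ κ x) x := by
  have hbd : -(τ * κ) < (1 - τ) * κ := by nlinarith [hτ.1, hτ.2]
  rcases lt_or_ge x (-(τ * κ)) with h1 | h1
  · rw [qHuberD_of_lt hτ hκ x h1]
    refine (hasDerivAt_left (hτ := hτ) (hκ := hκ) (κ * τ ^ 2 / 2) x).congr_of_eventuallyEq ?_
    filter_upwards [Iio_mem_nhds h1] with y hy
    exact qHuber_eqOn_left hτ hκ (Set.mem_Iic.mpr hy.le)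
  rcases lt_or_ge x ((1 - τ) * κ) with h2 | h2
  · rcases eq_or_lt_of_le h1 with he | hlt
    · -- boundary x = -(τ*κ)
      have hx : qHuberD τ κ x = -τ := by
        rw [qHuberD_of_mid hτ hκ x h1 h2.le, ← he]
        field_simp
      rw [hx]
      have hL : HasDerivWithinAt (qHuber τ κ) (-τ) (Set.Iic (-(τ * κ))) x :=
        ((hasDerivAt_left (hτ := hτ) (hκ := hκ) (κ * τ ^ 2 / 2) x).hasDerivWithinAt).congr
          (fun y hy => qHuber_eqOn_left hτ hκ hy)
          (qHuber_eqOn_left hτ hκ (Set.mem_Iic.mpr (le_of_eq he.symm)))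
      have hM : HasDerivWithinAt (qHuber τ κ) (-τ)
          (Set.Icc (-(τ * κ)) ((1 - τ) * κ)) x := by
        have := (hasDerivAt_mid (hτ := hτ) (hκ := hκ) x).hasDerivWithinAt
          (s := Set.Icc (-(τ * κ)) ((1 - τ) * κ))
        have hxk : x / κ = -τ := by rw [← he]; field_simp
        rw [hxk] at this
        exact this.congr (fun y hy => qHuber_eqOn_mid hτ hκ hy)
          (qHuber_eqOn_mid hτ hκ ⟨h1, h2.le⟩)
      have hU := hL.union hM
      rw [Set.Iic_union_Icc_eq_Iic hbd.le] at hU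
      exact hU.hasDerivAt (Iic_mem_nhds h2)
    · rw [qHuberD_of_mid hτ hκ x h1 h2.le]
      refine (hasDerivAt_mid (hτ := hτ) (hκ := hκ) x).congr_of_eventuallyEq ?_
      filter_upwards [Ioo_mem_nhds hlt h2] with y hy
      exact qHuber_eqOn_mid hτ hκ ⟨hy.1.le, hy.2.le⟩
  rcases eq_or_lt_of_le h2 with he | hgt
  · -- boundary x = (1-τ)*κ
    have hx : qHuberD τ κ x = 1 - τ := by
      rw [qHuberD_of_mid hτ hκ x h1 (le_of_eq he.symm), ← he]
      field_simp
    rw [hx]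
    have hM : HasDerivWithinAt (qHuber τ κ) (1 - τ)
        (Set.Icc (-(τ * κ)) ((1 - τ) * κ)) x := by
      have := (hasDerivAt_mid (hτ := hτ) (hκ := hκ) x).hasDerivWithinAt
        (s := Set.Icc (-(τ * κ)) ((1 - τ) * κ))
      have hxk : x / κ = 1 - τ := by rw [← he]; field_simp
      rw [hxk] at this
      exact this.congr (fun y hy => qHuber_eqOn_mid hτ hκ hy)
        (qHuber_eqOn_mid hτ hκ ⟨h1, le_of_eq he.symm⟩)
    have hR : HasDerivWithinAt (qHuber τ κ) (1 - τ) (Set.Ici ((1 - τ) * κ)) x :=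
      ((hasDerivAt_right (hτ := hτ) (hκ := hκ) (κ * (1 - τ) ^ 2 / 2) x).hasDerivWithinAt).congr
        (fun y hy => qHuber_eqOn_right hτ hκ hy)
        (qHuber_eqOn_right hτ hκ (Set.mem_Ici.mpr h2))
    have hU := hM.union hR
    rw [Set.Icc_union_Ici_eq_Ici hbd.le] at hU
    refine hU.hasDerivAt (Ici_mem_nhds ?_)
    calc -(τ * κ) < (1 - τ) * κ := hbd
    _ = x := he
  · rw [qHuberD_of_gt hτ hκ x hgt]
    refine (hasDerivAt_right (hτ := hτ) (hκ := hκ) (κ * (1 - τ) ^ 2 / 2) x).congr_of_eventuallyEq ?_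
    filter_upwards [Ioi_mem_nhds hgt] with y hy
    exact qHuber_eqOn_right hτ hκ (Set.mem_Ici.mpr hy.le)

end deriv


section loss
variable {n p : ℕ} {τ κ : ℝ} (hτ : τ ∈ Set.Ioo (0 : ℝ) 1) (hκ : 0 < κ)
  (A : Matrix (Fin n) (Fin p) ℝ) (b : Fin n → ℝ)

lemma sum_update_eq (z : Fin p → ℝ) (j : Fin p) (t : ℝ) (i : Fin n) :
    ∑ j', A i j' * Function.update z j t j' =
      (∑ j' ∈ Finset.univ.erase j, A i j' * z j') + A i j * t := by
  rw [← Finset.add_sum_erase Finset.univ _ (Finset.mem_univ j), Function.update_self]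
  rw [add_comm]
  congr 1
  exact Finset.sum_congr rfl fun j' hj' => by
    rw [Function.update_of_ne (Finset.ne_of_mem_erase hj')]

include hτ hκ

lemma hasDerivAt_Lf (z : Fin p → ℝ) (j : Fin p) (t₀ : ℝ) :
    HasDerivAt (fun t => (1 / (n : ℝ)) * ∑ i, qHuber τ κ (b i - ∑ j', A i j' * Function.update z j t j'))
      ((1 / (n : ℝ)) * ∑ i, qHuberD τ κ (b i - ∑ j', A i j' * Function.update z j t₀ j') * (-(A i j))) t₀ := by
  have hre : ∀ (t : ℝ) (i : Fin n), b i - ∑ j', A i j' * Function.update z j t j'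
      = (b i - ∑ j' ∈ Finset.univ.erase j, A i j' * z j') - A i j * t := by
    intro t i
    rw [sum_update_eq]
    ring
  have h : HasDerivAt (fun t => (1 / (n : ℝ)) * ∑ i, qHuber τ κ
      ((b i - ∑ j' ∈ Finset.univ.erase j, A i j' * z j') - A i j * t))
      ((1 / (n : ℝ)) * ∑ i, qHuberD τ κ
      ((b i - ∑ j' ∈ Finset.univ.erase j, A i j' * z j') - A i j * t₀) * (-(A i j))) t₀ := by
    refine HasDerivAt.const_mul _ (HasDerivAt.fun_sum fun i _ => ?_)
    have hin : HasDerivAt (fun t : ℝ => (b i - ∑ j' ∈ Finset.univ.erase j, A i j' * z j') - A i j * t)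
        (-(A i j)) t₀ := by
      simpa using ((hasDerivAt_id t₀).const_mul (A i j)).const_sub
        (b i - ∑ j' ∈ Finset.univ.erase j, A i j' * z j')
    exact (qHuber_hasDerivAt hτ hκ _).comp t₀ hin
  simp only [hre]
  exact h

lemma pder_Lf (Ln : (Fin p → ℝ) → ℝ)
    (hLn : ∀ x : Fin p → ℝ,
      Ln x = (1 / (n : ℝ)) * ∑ i, qHuber τ κ (b i - ∑ j, A i j * x j))
    (z : Fin p → ℝ) (j : Fin p) :
    pder Ln z j = (1 / (n : ℝ)) * ∑ i, qHuberD τ κ (b i - ∑ j', A i j' * z j') * (-(A i j)) := by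
  have hfe : (fun t => Ln (Function.update z j t)) =
      fun t => (1 / (n : ℝ)) * ∑ i, qHuber τ κ (b i - ∑ j', A i j' * Function.update z j t j') :=
    funext fun t => hLn _
  rw [pder, hfe]
  have h := (hasDerivAt_Lf hτ hκ A b z j (z j)).deriv
  rw [h]
  congr 1
  refine Finset.sum_congr rfl fun i _ => ?_
  rw [Function.update_eq_self]

lemma Lf_smooth (hcol : ∀ j : Fin p, Real.sqrt (∑ i, (A i j) ^ 2) ≤ Real.sqrt n)
    (Ln : (Fin p → ℝ) → ℝ)
    (hLn : ∀ x : Fin p → ℝ,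
      Ln x = (1 / (n : ℝ)) * ∑ i, qHuber τ κ (b i - ∑ j, A i j * x j))
    (z : Fin p → ℝ) (j : Fin p) (η : ℝ) :
    Ln (Function.update z j (z j + η)) ≤ Ln z + pder Ln z j * η + η ^ 2 / (2 * κ) := by
  have hcol2 : ∑ i, (A i j) ^ 2 ≤ (n : ℝ) := by
    have h1 : (0:ℝ) ≤ ∑ i, (A i j) ^ 2 := Finset.sum_nonneg fun i _ => sq_nonneg _
    calc ∑ i, (A i j) ^ 2 = Real.sqrt (∑ i, (A i j) ^ 2) ^ 2 := (Real.sq_sqrt h1).symm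
    _ ≤ Real.sqrt n ^ 2 := by
        have := hcol j
        nlinarith [Real.sqrt_nonneg (∑ i, (A i j) ^ 2)]
    _ = (n : ℝ) := Real.sq_sqrt (Nat.cast_nonneg n)
  have hinv : (0:ℝ) ≤ 1 / (n : ℝ) := by positivity
  set R : Fin n → ℝ := fun i => b i - ∑ j', A i j' * z j' with hR
  have hres : ∀ i, b i - ∑ j', A i j' * Function.update z j (z j + η) j' = R i - A i j * η := by
    intro i
    rw [sum_update_eq, hR]
    simp only
    rw [← Finset.add_sum_erase Finset.univ (fun j' => A i j' * z j') (Finset.mem_univ j)]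
    ring
  have hpt : ∀ i : Fin n, qHuber τ κ (R i - A i j * η) ≤
      qHuber τ κ (R i) + qHuberD τ κ (R i) * (-(A i j)) * η + (A i j) ^ 2 * (η ^ 2 / (2 * κ)) := by
    intro i
    have := qHuber_smooth_ineq hτ hκ (R i) (R i - A i j * η)
    have he : (R i - A i j * η - R i) = -(A i j) * η := by ring
    rw [he] at this
    calc qHuber τ κ (R i - A i j * η) ≤
        qHuber τ κ (R i) + qHuberD τ κ (R i) * (-(A i j) * η) + (-(A i j) * η) ^ 2 / (2 * κ) := this
    _ = qHuber τ κ (R i) + qHuberD τ κ (R i) * (-(A i j)) * η + (A i j) ^ 2 * (η ^ 2 / (2 * κ)) := by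
        ring
  have hsum : ∑ i, qHuber τ κ (R i - A i j * η) ≤
      ∑ i, (qHuber τ κ (R i) + qHuberD τ κ (R i) * (-(A i j)) * η + (A i j) ^ 2 * (η ^ 2 / (2 * κ))) :=
    Finset.sum_le_sum fun i _ => hpt i
  have hη2 : (0:ℝ) ≤ η ^ 2 / (2 * κ) := by positivity
  have hL1 : Ln (Function.update z j (z j + η)) =
      (1 / (n : ℝ)) * ∑ i, qHuber τ κ (R i - A i j * η) := by
    rw [hLn]
    congr 1
    exact Finset.sum_congr rfl fun i _ => by rw [hres i]
  rw [hL1, hLn z, pder_Lf hτ hκ A b Ln hLn z j]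
  have expand : (1 / (n : ℝ)) * ∑ i, (qHuber τ κ (R i) + qHuberD τ κ (R i) * (-(A i j)) * η
        + (A i j) ^ 2 * (η ^ 2 / (2 * κ)))
      = (1 / (n : ℝ)) * ∑ i, qHuber τ κ (R i)
        + ((1 / (n : ℝ)) * ∑ i, qHuberD τ κ (R i) * (-(A i j))) * η
        + ((1 / (n : ℝ)) * ∑ i, (A i j) ^ 2) * (η ^ 2 / (2 * κ)) := by
    rw [Finset.sum_add_distrib, Finset.sum_add_distrib, ← Finset.sum_mul, ← Finset.sum_mul]
    ring
  have hfrac : ((1 / (n : ℝ)) * ∑ i, (A i j) ^ 2) * (η ^ 2 / (2 * κ)) ≤ 1 * (η ^ 2 / (2 * κ)) := by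
    apply mul_le_mul_of_nonneg_right _ hη2
    rcases Nat.eq_zero_or_pos n with hn | hn
    · subst hn
      simp
    · have hn' : (0:ℝ) < (n : ℝ) := by exact_mod_cast hn
      rw [div_mul_eq_mul_div, one_mul, div_le_one hn']
      exact hcol2
  have hmul := mul_le_mul_of_nonneg_left hsum hinv
  rw [expand] at hmul
  calc (1 / (n : ℝ)) * ∑ i, qHuber τ κ (R i - A i j * η) ≤ _ := hmul
  _ ≤ (1 / (n : ℝ)) * ∑ i, qHuber τ κ (R i)
      + ((1 / (n : ℝ)) * ∑ i, qHuberD τ κ (R i) * (-(A i j))) * η + η ^ 2 / (2 * κ) := by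
      have := hfrac
      linarith

lemma Lf_convex (Ln : (Fin p → ℝ) → ℝ)
    (hLn : ∀ x : Fin p → ℝ,
      Ln x = (1 / (n : ℝ)) * ∑ i, qHuber τ κ (b i - ∑ j, A i j * x j))
    (z y : Fin p → ℝ) :
    Ln z + ∑ j, pder Ln z j * (y j - z j) ≤ Ln y := by
  have hinv : (0:ℝ) ≤ 1 / (n : ℝ) := by positivity
  set R : (Fin p → ℝ) → Fin n → ℝ := fun w i => b i - ∑ j', A i j' * w j' with hR
  have hdiff : ∀ i, R y i - R z i = ∑ j, (-(A i j)) * (y j - z j) := by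
    intro i
    show (b i - ∑ j', A i j' * y j') - (b i - ∑ j', A i j' * z j') = _
    rw [show (b i - ∑ j', A i j' * y j') - (b i - ∑ j', A i j' * z j')
        = ∑ j', A i j' * z j' - ∑ j', A i j' * y j' from by ring,
      ← Finset.sum_sub_distrib]
    exact Finset.sum_congr rfl fun j _ => by ring
  have hgrad : ∑ j, pder Ln z j * (y j - z j)
      = (1 / (n : ℝ)) * ∑ i, qHuberD τ κ (R z i) * (R y i - R z i) := by
    calc ∑ j, pder Ln z j * (y j - z j)
        = ∑ j, (1 / (n : ℝ)) * ∑ i, qHuberD τ κ (R z i) * (-(A i j)) * (y j - z j) := by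
          refine Finset.sum_congr rfl fun j _ => ?_
          rw [pder_Lf hτ hκ A b Ln hLn z j, mul_assoc, Finset.sum_mul]
      _ = (1 / (n : ℝ)) * ∑ j, ∑ i, qHuberD τ κ (R z i) * (-(A i j)) * (y j - z j) := by
          rw [Finset.mul_sum]
      _ = (1 / (n : ℝ)) * ∑ i, ∑ j, qHuberD τ κ (R z i) * (-(A i j)) * (y j - z j) := by
          rw [Finset.sum_comm]
      _ = (1 / (n : ℝ)) * ∑ i, qHuberD τ κ (R z i) * (R y i - R z i) := by
          congr 1
          refine Finset.sum_congr rfl fun i _ => ?_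
          rw [hdiff i, Finset.mul_sum]
          refine Finset.sum_congr rfl fun j _ => by ring
  have hpt : ∀ i : Fin n, qHuber τ κ (R z i) + qHuberD τ κ (R z i) * (R y i - R z i)
      ≤ qHuber τ κ (R y i) := fun i => qHuber_convex_ineq hτ hκ _ _
  have hsum := Finset.sum_le_sum fun i (_ : i ∈ Finset.univ) => hpt i
  have hmul := mul_le_mul_of_nonneg_left hsum hinv
  rw [Finset.sum_add_distrib, mul_add] at hmul
  rw [hLn z, hLn y, hgrad]
  exact hmul

end loss

lemma rec_step (c dk dk1 : ℝ) (hc : 0 < c) (k : ℕ) (h1 : 0 < dk1)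
    (h2 : dk1 ≤ dk - c * dk ^ 2) (h3 : c * k * dk ≤ 1) : c * (k + 1 : ℕ) * dk1 ≤ 1 := by
  have hdk : 0 < dk := by nlinarith [sq_nonneg dk]
  have hkn : (0:ℝ) ≤ (k : ℝ) := Nat.cast_nonneg k
  push_cast
  set u := c * dk with hu
  have hupos : 0 < u := mul_pos hc hdk
  rcases le_total u 1 with hle | hge
  · have hprod : (0:ℝ) ≤ (1 - u) * (1 - (k : ℝ) * u) := by
      apply mul_nonneg (by linarith)
      nlinarith
    have hstep : c * ((k : ℝ) + 1) * dk1 ≤ c * ((k : ℝ) + 1) * (dk - c * dk ^ 2) := by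
      apply mul_le_mul_of_nonneg_left h2
      positivity
    nlinarith [sq_nonneg u]
  · have hneg : dk - c * dk ^ 2 ≤ 0 := by nlinarith
    have hstep : c * ((k : ℝ) + 1) * dk1 ≤ c * ((k : ℝ) + 1) * (dk - c * dk ^ 2) := by
      apply mul_le_mul_of_nonneg_left h2
      positivity
    have : c * ((k : ℝ) + 1) * (dk - c * dk ^ 2) ≤ 0 :=
      mul_nonpos_of_nonneg_of_nonpos (by positivity) hneg
    linarith

/-- Sublinear convergence of generalized OMP (fully corrective greedy selection) for
the empirical quantile Huber loss: after `k ≥ 2‖x̃‖₁²/(κ ε)` iterations, the objective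
gap to any reference vector `x̃` is at most `ε`. -/
theorem omp_qHuber_convergence (n p : ℕ) (τ κ : ℝ)
    (hτ : τ ∈ Set.Ioo (0 : ℝ) 1) (hκ : 0 < κ)
    (A : Matrix (Fin n) (Fin p) ℝ) (b : Fin n → ℝ)
    (hcol : ∀ j : Fin p, Real.sqrt (∑ i, (A i j) ^ 2) ≤ Real.sqrt n)
    (Ln : (Fin p → ℝ) → ℝ)
    (hLn : ∀ x : Fin p → ℝ,
      Ln x = (1 / (n : ℝ)) * ∑ i, qHuber τ κ (b i - ∑ j, A i j * x j))
    (S : ℕ → Finset (Fin p)) (x : ℕ → Fin p → ℝ) (isel : ℕ → Fin p)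
    (hS0 : S 0 = ∅) (hx0 : x 0 = 0)
    (hSk : ∀ k : ℕ, S (k + 1) = insert (isel k) (S k))
    (hsel : ∀ k : ℕ, ∀ j : Fin p, |pder Ln (x k) j| ≤ |pder Ln (x k) (isel k)|)
    (hsupp : ∀ k : ℕ, ∀ j ∉ S (k + 1), x (k + 1) j = 0)
    (hmin : ∀ k : ℕ, ∀ y : Fin p → ℝ, (∀ j ∉ S (k + 1), y j = 0) →
      Ln (x (k + 1)) ≤ Ln y) :
    ∀ xtil : Fin p → ℝ, ∀ ε : ℝ, 0 < ε →
      ∀ k : ℕ, (k : ℝ) ≥ 2 * (∑ j, |xtil j|) ^ 2 / (κ * ε) →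
        Ln (x k) - Ln xtil ≤ ε := by
  intro xtil ε hε
  -- support of iterates
  have hz : ∀ k : ℕ, ∀ j ∉ S k, x k j = 0 := by
    intro k
    cases k with
    | zero => intro j _; rw [hx0]; rfl
    | succ m => exact hsupp m
  -- monotone decrease
  have hdec : ∀ k : ℕ, Ln (x (k + 1)) ≤ Ln (x k) := by
    intro k
    refine hmin k (x k) fun j hj => hz k j fun hmem => hj ?_
    rw [hSk k]
    exact Finset.mem_insert_of_mem hmem
  -- first-order optimality on the active set
  have hopt : ∀ k : ℕ, ∀ j ∈ S (k + 1), pder Ln (x (k + 1)) j = 0 := by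
    intro k j hj
    have hlm : IsLocalMin (fun t => Ln (Function.update (x (k + 1)) j t)) (x (k + 1) j) := by
      apply Filter.Eventually.of_forall
      intro t
      simp only [Function.update_eq_self]
      refine hmin k (Function.update (x (k + 1)) j t) fun j' hj' => ?_
      rw [Function.update_of_ne (fun h => hj' (by rw [h]; exact hj))]
      exact hsupp k j' hj'
    exact hlm.deriv_eq_zero
  -- gradient-iterate orthogonality
  have hprod : ∀ k : ℕ, ∑ j, pder Ln (x k) j * x k j = 0 := by
    intro k
    refine Finset.sum_eq_zero fun j _ => ?_
    cases k with
    | zero => rw [hx0]; simp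
    | succ m =>
      by_cases hj : j ∈ S (m + 1)
      · rw [hopt m j hj, zero_mul]
      · rw [hz (m + 1) j hj, mul_zero]
  set B := ∑ j, |xtil j| with hB
  have hBnn : 0 ≤ B := Finset.sum_nonneg fun j _ => abs_nonneg _
  -- gap bound via convexity
  have hgap : ∀ k : ℕ, Ln (x k) - Ln xtil ≤ |pder Ln (x k) (isel k)| * B := by
    intro k
    have hc := Lf_convex hτ hκ A b Ln hLn (x k) xtil
    have hsplit : ∑ j, pder Ln (x k) j * (xtil j - x k j)
        = ∑ j, pder Ln (x k) j * xtil j - ∑ j, pder Ln (x k) j * x k j := by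
      rw [← Finset.sum_sub_distrib]
      exact Finset.sum_congr rfl fun j _ => by ring
    rw [hsplit, hprod k, sub_zero] at hc
    have habs : -∑ j, pder Ln (x k) j * xtil j ≤ |pder Ln (x k) (isel k)| * B := by
      calc -∑ j, pder Ln (x k) j * xtil j = ∑ j, -(pder Ln (x k) j * xtil j) := by
            rw [Finset.sum_neg_distrib]
      _ ≤ ∑ j, |pder Ln (x k) (isel k)| * |xtil j| := by
          refine Finset.sum_le_sum fun j _ => ?_
          calc -(pder Ln (x k) j * xtil j) ≤ |pder Ln (x k) j * xtil j| := neg_le_abs _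
          _ = |pder Ln (x k) j| * |xtil j| := abs_mul _ _
          _ ≤ |pder Ln (x k) (isel k)| * |xtil j| :=
              mul_le_mul_of_nonneg_right (hsel k j) (abs_nonneg _)
      _ = |pder Ln (x k) (isel k)| * B := by rw [← Finset.mul_sum]
    linarith
  -- progress bound via smoothness
  have hprog : ∀ k : ℕ,
      Ln (x (k + 1)) ≤ Ln (x k) - κ * (pder Ln (x k) (isel k)) ^ 2 / 2 := by
    intro k
    set g := pder Ln (x k) (isel k) with hg
    set y := Function.update (x k) (isel k) (x k (isel k) + (-κ * g)) with hy
    have h1 : Ln (x (k + 1)) ≤ Ln y := by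
      refine hmin k y fun j hj => ?_
      have hne : j ≠ isel k := by
        intro h
        exact hj (h ▸ (hSk k ▸ Finset.mem_insert_self (isel k) (S k)))
      rw [hy, Function.update_of_ne hne]
      refine hz k j fun hmem => hj ?_
      rw [hSk k]
      exact Finset.mem_insert_of_mem hmem
    have h2 := Lf_smooth hτ hκ A b hcol Ln hLn (x k) (isel k) (-κ * g)
    have h3 : g * (-κ * g) + (-κ * g) ^ 2 / (2 * κ) = -(κ * g ^ 2 / 2) := by
      field_simp
      ring
    calc Ln (x (k + 1)) ≤ Ln y := h1
    _ ≤ Ln (x k) + g * (-κ * g) + (-κ * g) ^ 2 / (2 * κ) := h2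
    _ = Ln (x k) - κ * g ^ 2 / 2 := by rw [add_assoc, h3]; ring
  -- case B = 0
  rcases eq_or_lt_of_le hBnn with hB0 | hBpos
  · have hx0' : ∀ j, xtil j = 0 := by
      intro j
      have := (Finset.sum_eq_zero_iff_of_nonneg (fun j _ => abs_nonneg (xtil j))).mp hB0.symm
      exact abs_eq_zero.mp (this j (Finset.mem_univ j))
    intro k _
    cases k with
    | zero =>
      have : xtil = x 0 := by
        funext j
        rw [hx0, hx0' j]; rfl
      rw [this]
      simpa using hε.le
    | succ m =>
      have := hmin m xtil fun j _ => hx0' j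
      linarith
  -- main case B > 0
  set c := κ / (2 * B ^ 2) with hc
  have hcpos : 0 < c := by positivity
  have hstep : ∀ m : ℕ, 0 < Ln (x (m + 1)) - Ln xtil →
      Ln (x (m + 1)) - Ln xtil ≤ (Ln (x m) - Ln xtil) - c * (Ln (x m) - Ln xtil) ^ 2 := by
    intro m hd
    set G := |pder Ln (x m) (isel m)| with hG
    have hGnn : 0 ≤ G := abs_nonneg _
    have hdm : 0 < Ln (x m) - Ln xtil := by
      have := hprog m
      have hsq : 0 ≤ κ * (pder Ln (x m) (isel m)) ^ 2 / 2 := by positivity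
      linarith
    have hgm := hgap m
    have hsq : (Ln (x m) - Ln xtil) ^ 2 ≤ G ^ 2 * B ^ 2 := by nlinarith
    have hcb : c * (Ln (x m) - Ln xtil) ^ 2 ≤ κ * G ^ 2 / 2 := by
      have h1 : c * (Ln (x m) - Ln xtil) ^ 2 ≤ c * (G ^ 2 * B ^ 2) :=
        mul_le_mul_of_nonneg_left hsq hcpos.le
      have h2 : c * (G ^ 2 * B ^ 2) = κ * G ^ 2 / 2 := by
        rw [hc]
        field_simp
        try ring
      linarith
    have hsq2 : (pder Ln (x m) (isel m)) ^ 2 = G ^ 2 := (sq_abs _).symm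
    have := hprog m
    rw [hsq2] at this
    linarith
  have hinv : ∀ m : ℕ, c * m * (Ln (x m) - Ln xtil) ≤ 1 ∨ Ln (x m) - Ln xtil ≤ 0 := by
    intro m
    induction m with
    | zero => left; simp
    | succ m ih =>
      by_cases hd : Ln (x (m + 1)) - Ln xtil ≤ 0
      · right; exact hd
      · push_neg at hd
        left
        have hdm : c * m * (Ln (x m) - Ln xtil) ≤ 1 := by
          rcases ih with h | h
          · exact h
          · exfalso
            have := hdec m
            linarith
        exact rec_step c (Ln (x m) - Ln xtil) (Ln (x (m + 1)) - Ln xtil) hcpos m hd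
          (hstep m hd) hdm
  intro k hk
  rcases hinv k with hck | hle
  · by_cases hd : Ln (x k) - Ln xtil ≤ 0
    · linarith
    · push_neg at hd
      have hkf : (k : ℝ) ≥ 2 * B ^ 2 / (κ * ε) := hk
      have hce : c * (2 * B ^ 2 / (κ * ε)) = 1 / ε := by
        rw [hc]
        field_simp
        try ring
      have h1 : c * (k : ℝ) ≥ 1 / ε := by
        calc c * (k : ℝ) ≥ c * (2 * B ^ 2 / (κ * ε)) :=
          mul_le_mul_of_nonneg_left hkf hcpos.le
        _ = 1 / ε := hce
      have h2 : c * (k : ℝ) * ε ≥ 1 := by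
        have := mul_le_mul_of_nonneg_right h1 hε.le
        rwa [one_div, inv_mul_cancel₀ (ne_of_gt hε)] at this
      nlinarith
  · linarith
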